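/- Let K be a closed subset of [0,1] with 0 ∈ K, and let {A_q}_{q∈K} be events with A_0 = Ω, ℙ(A_q) = 1 − q for each q ∈ K, and A_q ⊆ A_p whenever p, q ∈ K with p < q. Define Z(ω) = sup{q ∈ K : ω ∈ A_q}. Then: (a) ℙ(Z < q) ≤ q ≤ ℙ(Z ≤ q) for every q ∈ K; (b) if q ∈ K and (q−ε, q) ∩ K = ∅ for some ε > 0, then ℙ(Z < q) = q; (c) if p ∈ (0,1] satisfies (p−ε, p) ∩ K = ∅ for some ε > 0 and r = sup(({0} ∪ ((0,p) ∩ K))), then ℙ(Z ≤ r) ≥ p and ℙ(Z < r) < p. -/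

import Mathlib

open MeasureTheory Filter Set

section Defs

variable {Ω : Type*} [MeasurableSpace Ω]

/-- An atomless probability space: every event can be split to achieve any smaller measure
(Sierpiński's property, equivalent to atomlessness for probability measures). -/
def Atomless (P : Measure Ω) : Prop :=
  ∀ A : Set Ω, MeasurableSet A → ∀ r : ENNReal, r ≤ P A →
    ∃ B : Set Ω, B ⊆ A ∧ MeasurableSet B ∧ P B = r

/-- `A` is a tail event for `X`: outside a null set, `X ω ≥ X ω'` for `ω ∈ A`, `ω' ∈ Aᶜ`. -/
def IsTailEvent (P : Measure Ω) (X : Ω → ℝ) (A : Set Ω) : Prop :=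
  MeasurableSet A ∧ ∃ N : Set Ω, P N = 0 ∧
    ∀ ω ∈ A, ω ∉ N → ∀ ω' ∈ Aᶜ, ω' ∉ N → X ω' ≤ X ω

/-- `A` is a `p`-tail event for `X`: a tail event with `P A = 1 - p`. -/
def IsPTailEvent (P : Measure Ω) (X : Ω → ℝ) (p : ℝ) (A : Set Ω) : Prop :=
  IsTailEvent P X A ∧ P A = ENNReal.ofReal (1 - p)

/-- A random vector is `p`-concentrated if a single event is a `p`-tail event for every
component. -/
def PConcentrated (P : Measure Ω) {d : ℕ} (X : Fin d → Ω → ℝ) (p : ℝ) : Prop :=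
  ∃ A : Set Ω, ∀ i, IsPTailEvent P (X i) p A

/-- A random vector is `K`-concentrated if it is `p`-concentrated for every `p ∈ K`. -/
def KConcentrated (P : Measure Ω) {d : ℕ} (X : Fin d → Ω → ℝ) (K : Set ℝ) : Prop :=
  ∀ p ∈ K, PConcentrated P X p

/-- Left quantile function `Q_X⁻(p) = inf {x | ℙ(X ≤ x) ≥ p}` (also `VaR_p`). -/
noncomputable def leftQuantile (P : Measure Ω) (X : Ω → ℝ) (p : ℝ) : ℝ :=
  sInf {x : ℝ | ENNReal.ofReal p ≤ P {ω | X ω ≤ x}}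

/-- Right quantile function `Q_X⁺(p) = inf {x | ℙ(X ≤ x) > p}` (also `VaR⁺_p`). -/
noncomputable def rightQuantile (P : Measure Ω) (X : Ω → ℝ) (p : ℝ) : ℝ :=
  sInf {x : ℝ | ENNReal.ofReal p < P {ω | X ω ≤ x}}

/-- `Q_X : [0,1] → ℝ`, equal to `Q_X⁺` at `0` and to `Q_X⁻` on `(0,1]`. -/
noncomputable def Q (P : Measure Ω) (X : Ω → ℝ) (p : ℝ) : ℝ :=
  if p = 0 then rightQuantile P X 0 else leftQuantile P X p

/-- Membership in L∞: essentially bounded (and measurable) random variables. -/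
def MemLinf (P : Measure Ω) (X : Ω → ℝ) : Prop :=
  Measurable X ∧ ∃ C : ℝ, ∀ᵐ ω ∂P, |X ω| ≤ C

/-- A functional `ρ` on L∞ is `K`-additive if it is additive on every `K`-concentrated
random vector (of dimension `d ≥ 2`) with essentially bounded components. -/
def KAdditive (P : Measure Ω) (K : Set ℝ) (ρ : (Ω → ℝ) → ℝ) : Prop :=
  ∀ d : ℕ, 2 ≤ d → ∀ X : Fin d → Ω → ℝ, (∀ i, MemLinf P (X i)) →
    KConcentrated P X K → ρ (∑ i, X i) = ∑ i, ρ (X i)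

/-- A pair of random variables is comonotonic. -/
def ComonotonePair (P : Measure Ω) (X Z : Ω → ℝ) : Prop :=
  ∀ᵐ w ∂(P.prod P), 0 ≤ (X w.1 - X w.2) * (Z w.1 - Z w.2)

/-- A random vector is `g`-comonotonic: some random variable `Z` with quantile function `g`
on `[0,1]` is comonotonic with every component. -/
def GComonotone (P : Measure Ω) {d : ℕ} (g : ℝ → ℝ) (X : Fin d → Ω → ℝ) : Prop :=
  ∃ Z : Ω → ℝ, Measurable Z ∧ (∀ p ∈ Icc (0:ℝ) 1, Q P Z p = g p) ∧
    ∀ i, ComonotonePair P (X i) Z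

/-- A functional `ρ` on L∞ is `g`-additive if it is additive on every `g`-comonotonic
random vector (of dimension `d ≥ 2`) with essentially bounded components. -/
def GAdditive (P : Measure Ω) (g : ℝ → ℝ) (ρ : (Ω → ℝ) → ℝ) : Prop :=
  ∀ d : ℕ, 2 ≤ d → ∀ X : Fin d → Ω → ℝ, (∀ i, MemLinf P (X i)) →
    GComonotone P g X → ρ (∑ i, X i) = ∑ i, ρ (X i)

/-- The distortion riskmetric `I_h`. -/
noncomputable def distortionRM (P : Measure Ω) (h : ℝ → ℝ) (X : Ω → ℝ) : ℝ :=
  (∫ x in Iio (0:ℝ), (h ((P {ω | x < X ω}).toReal) - h 1)) +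
    ∫ x in Ioi (0:ℝ), h ((P {ω | x < X ω}).toReal)

/-- The spectral risk measure `ρ_g(X) = ∫₀¹ g(t) Q_X(t) dt`. -/
noncomputable def specRM (P : Measure Ω) (g : ℝ → ℝ) (X : Ω → ℝ) : ℝ :=
  ∫ t in (0:ℝ)..1, g t * Q P X t

/-- Expected Shortfall at level `p`. -/
noncomputable def ES (P : Measure Ω) (p : ℝ) (X : Ω → ℝ) : ℝ :=
  (1 - p)⁻¹ * ∫ q in p..1, leftQuantile P X q

end Defs

/-- The class 𝒢 of increasing functions on `[0,1]`, right-continuous at `0` and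
left-continuous on `(0,1]`. -/
def MemG (g : ℝ → ℝ) : Prop :=
  MonotoneOn g (Icc 0 1) ∧
    Tendsto g (nhdsWithin 0 (Ioi 0)) (nhds (g 0)) ∧
    ∀ p ∈ Ioc (0:ℝ) 1, Tendsto g (nhdsWithin p (Iio p)) (nhds (g p))

/-- `p` is a point of strict increase on the right of `g`. -/
def IsPSIR (g : ℝ → ℝ) (p : ℝ) : Prop :=
  p ∈ Ico (0:ℝ) 1 ∧ ∀ s ∈ Ioc p 1, g p < g s

/-- `p` is a point of strict increase on the left of `g`. -/
def IsPSIL (g : ℝ → ℝ) (p : ℝ) : Prop :=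
  p ∈ Ioc (0:ℝ) 1 ∧ ∀ s ∈ Ico (0:ℝ) p, g s < g p

/-- The set of points of strict increase of `g`. -/
def PSI (g : ℝ → ℝ) : Set ℝ :=
  {p | IsPSIR g p ∨ IsPSIL g p}

/-- `f ≾ g`: there is an increasing `h` with `f = h ∘ g` a.e. on `[0,1]`. -/
def Prec (f g : ℝ → ℝ) : Prop :=
  ∃ h : ℝ → ℝ, Monotone h ∧
    ∀ᵐ t ∂(volume.restrict (Icc (0:ℝ) 1)), f t = h (g t)

/-- The map `𝒱 : K ↦ (p ↦ sup ((0,p) ∩ K))` (with `sup ∅ = 0`, the junk value of `sSup` in `ℝ`). -/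
noncomputable def VK (K : Set ℝ) (p : ℝ) : ℝ :=
  sSup (Ioo (0:ℝ) p ∩ K)

/-- A risk spectrum: a nonnegative element of 𝒢 integrating to 1. -/
def IsRiskSpectrum (g : ℝ → ℝ) : Prop :=
  MemG g ∧ (∀ t ∈ Icc (0:ℝ) 1, 0 ≤ g t) ∧ (∫ t in (0:ℝ)..1, g t) = 1
/-- Properties of `Z(ω) = sup {q ∈ K : ω ∈ A_q}` for a nested family of
events `{A_q}_{q ∈ K}` with `A_0 = Ω` and `ℙ(A_q) = 1 - q`. -/
theorem stmt_13 {Ω : Type*} [MeasurableSpace Ω] (P : MeasureTheory.Measure Ω)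
    [MeasureTheory.IsProbabilityMeasure P] (hP : Atomless P)
    (K : Set ℝ) (hKc : IsClosed K) (hK : K ⊆ Icc 0 1) (h0K : (0:ℝ) ∈ K)
    (A : ℝ → Set Ω) (hA0 : A 0 = Set.univ)
    (hAmeas : ∀ q ∈ K, MeasurableSet (A q))
    (hAP : ∀ q ∈ K, P (A q) = ENNReal.ofReal (1 - q))
    (hnested : ∀ p ∈ K, ∀ q ∈ K, p < q → A q ⊆ A p)
    (Z : Ω → ℝ) (hZ : ∀ ω, Z ω = sSup {q | q ∈ K ∧ ω ∈ A q}) :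
    (∀ q ∈ K,
      P {ω | Z ω < q} ≤ ENNReal.ofReal q ∧ ENNReal.ofReal q ≤ P {ω | Z ω ≤ q}) ∧
    (∀ q ∈ K, ∀ ε > 0, Ioo (q - ε) q ∩ K = ∅ →
      P {ω | Z ω < q} = ENNReal.ofReal q) ∧
    (∀ p ∈ Ioc (0:ℝ) 1, ∀ ε > 0, Ioo (p - ε) p ∩ K = ∅ →
      ∀ r : ℝ, r = sSup ({0} ∪ (Ioo 0 p ∩ K)) →
        ENNReal.ofReal p ≤ P {ω | Z ω ≤ r} ∧ P {ω | Z ω < r} < ENNReal.ofReal p) := by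
  have hbdd : ∀ ω : Ω, BddAbove {q | q ∈ K ∧ ω ∈ A q} :=
    fun ω => ⟨1, fun x hx => (hK hx.1).2⟩
  have hne : ∀ ω : Ω, ({q | q ∈ K ∧ ω ∈ A q}).Nonempty :=
    fun ω => ⟨0, h0K, by simp [hA0]⟩
  have hmem_le : ∀ ω, ∀ q ∈ K, ω ∈ A q → q ≤ Z ω := by
    intro ω q hq hωq
    rw [hZ]; exact le_csSup (hbdd ω) ⟨hq, hωq⟩
  have hcompl : ∀ q ∈ K, P (A q)ᶜ = ENNReal.ofReal q := by
    intro q hq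
    rw [measure_compl (hAmeas q hq) (measure_ne_top P _), hAP q hq, measure_univ,
      show (1:ENNReal) = ENNReal.ofReal 1 by simp,
      ← ENNReal.ofReal_sub _ (by linarith [(hK hq).2] : (0:ℝ) ≤ 1 - q)]
    congr 1; ring
  have parta : ∀ q ∈ K,
      P {ω | Z ω < q} ≤ ENNReal.ofReal q ∧ ENNReal.ofReal q ≤ P {ω | Z ω ≤ q} := by
    intro q hq
    constructor
    · calc P {ω | Z ω < q} ≤ P (A q)ᶜ := by
            refine measure_mono fun ω hω hmem => absurd (hmem_le ω q hq hmem) (not_le.2 hω)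
        _ = ENNReal.ofReal q := hcompl q hq
    · rw [← hcompl q hq]
      refine measure_mono fun ω hω => ?_
      rw [Set.mem_setOf_eq, hZ]
      refine csSup_le (hne ω) fun x hx => ?_
      by_contra hgt
      push_neg at hgt
      exact hω (hnested q hq x hx.1 hgt hx.2)
  refine ⟨parta, ?_, ?_⟩
  · intro q hq ε hε hKε
    rw [Set.eq_empty_iff_forall_notMem] at hKε
    refine le_antisymm (parta q hq).1 ?_
    rw [← hcompl q hq]
    refine measure_mono fun ω hω => ?_
    rw [Set.mem_setOf_eq, hZ]
    have hub : ∀ x ∈ {q' | q' ∈ K ∧ ω ∈ A q'}, x ≤ q - ε := by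
      intro x hx
      have hxq : x < q := by
        rcases lt_trichotomy x q with h|h|h
        · exact h
        · exact absurd (h ▸ hx.2) hω
        · exact absurd (hnested q hq x hx.1 h hx.2) hω
      by_contra hgt
      push_neg at hgt
      exact hKε x ⟨⟨hgt, hxq⟩, hx.1⟩
    exact lt_of_le_of_lt (csSup_le (hne ω) hub) (by linarith)
  · intro p hp ε hε hKε r hr
    rw [Set.eq_empty_iff_forall_notMem] at hKε
    have hT0 : (0:ℝ) ∈ ({0} ∪ (Ioo 0 p ∩ K)) := Or.inl rfl
    have hTub : ∀ x ∈ ({0} ∪ (Ioo 0 p ∩ K)), x ≤ max 0 (p - ε) := by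
      rintro x (rfl | ⟨hx1, hx2⟩)
      · exact le_max_left _ _
      · refine le_max_of_le_right ?_
        by_contra h; push_neg at h
        exact hKε x ⟨⟨h, hx1.2⟩, hx2⟩
    have hrle : r ≤ max 0 (p - ε) := hr ▸ csSup_le ⟨0, hT0⟩ hTub
    have hrp : r < p := lt_of_le_of_lt hrle (max_lt hp.1 (by linarith))
    have hr0 : (0:ℝ) ≤ r := hr ▸ le_csSup ⟨_, hTub⟩ hT0
    have hTK : ({0} ∪ (Ioo 0 p ∩ K)) ⊆ K := by
      rintro x (rfl | hx)
      · exact h0K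
      · exact hx.2
    have hrK : r ∈ K := by
      rw [hr]
      have hcl := csSup_mem_closure ⟨0, hT0⟩ ⟨max 0 (p - ε), hTub⟩
      have := closure_mono hTK hcl
      rwa [hKc.closure_eq] at this
    have hrb : ∀ x ∈ K, x < p → x ≤ r := by
      intro x hx hxp
      rcases eq_or_lt_of_le (show (0:ℝ) ≤ x from (hK hx).1) with h | h
      · rw [← h]; exact hr0
      · exact hr ▸ le_csSup ⟨_, hTub⟩ (Or.inr ⟨⟨h, hxp⟩, hx⟩)
    refine ⟨?_, lt_of_le_of_lt (parta r hrK).1 ((ENNReal.ofReal_lt_ofReal_iff hp.1).2 hrp)⟩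
    by_cases hcase : (K ∩ Ici p).Nonempty
    · set q' := sInf (K ∩ Ici p) with hq'
      have hbb : BddBelow (K ∩ Ici p) := ⟨0, fun x hx => (hK hx.1).1⟩
      have hq'mem : q' ∈ K ∩ Ici p := (hKc.inter isClosed_Ici).csInf_mem hcase hbb
      have hsub : {ω | Z ω ≤ r}ᶜ ⊆ A q' := by
        intro ω hω
        simp only [Set.mem_compl_iff, Set.mem_setOf_eq, not_le] at hω
        rw [hZ] at hω
        obtain ⟨x, hx, hrx⟩ := exists_lt_of_lt_csSup (hne ω) hω
        have hxp : p ≤ x := by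
          by_contra h; push_neg at h
          exact absurd (hrb x hx.1 h) (not_le.2 hrx)
        rcases eq_or_lt_of_le (csInf_le hbb ⟨hx.1, hxp⟩) with h | h
        · rw [hq', h]; exact hx.2
        · exact hnested q' hq'mem.1 x hx.1 h hx.2
      have h1 : (1:ENNReal) ≤ P {ω | Z ω ≤ r} + ENNReal.ofReal (1 - q') := by
        calc (1:ENNReal) = P (Set.univ) := measure_univ.symm
          _ = P ({ω | Z ω ≤ r} ∪ {ω | Z ω ≤ r}ᶜ) := by rw [Set.union_compl_self]
          _ ≤ P {ω | Z ω ≤ r} + P {ω | Z ω ≤ r}ᶜ := measure_union_le _ _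
          _ ≤ _ := add_le_add_right
              ((measure_mono hsub).trans_eq (hAP q' hq'mem.1)) _
      have h2 : ENNReal.ofReal q' ≤ P {ω | Z ω ≤ r} := by
        have hq'1 : (0:ℝ) ≤ 1 - q' := by linarith [(hK hq'mem.1).2]
        have heq : ENNReal.ofReal q' = 1 - ENNReal.ofReal (1 - q') := by
          rw [show (1:ENNReal) = ENNReal.ofReal 1 by simp,
            ← ENNReal.ofReal_sub _ hq'1]
          congr 1; ring
        rw [heq]
        exact tsub_le_iff_right.2 h1
      exact le_trans (ENNReal.ofReal_le_ofReal hq'mem.2) h2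
    · have hall : ∀ ω, Z ω ≤ r := by
        intro ω; rw [hZ]
        refine csSup_le (hne ω) fun x hx => hrb x hx.1 ?_
        by_contra h; push_neg at h
        exact hcase ⟨x, hx.1, h⟩
      rw [show {ω | Z ω ≤ r} = Set.univ from Set.eq_univ_of_forall hall, measure_univ]
      exact ENNReal.ofReal_le_one.2 hp.2
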